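/- Let Q ⊆ ℝ^η × ℝ × ℝ be the set of (x, y, z) with x ∈ [L, U], y ≥ 0, z ∈ [0, 1], satisfying y ≥ w · x + b and, for every subset I ⊆ {1,…,η}, y ≤ Σ_{i ∈ I} w_i (x_i − L̆_i (1 − z)) + ( b + Σ_{i ∉ I} w_i Ŭ_i ) z. Then Q together with the integrality constraint z ∈ {0,1} is an ideal MIP formulation of gr(ReLU ∘ f; [L, U]): (i) the projection onto the (x, y)-coordinates of {(x,y,z) ∈ Q : z ∈ {0,1}} equals gr(ReLU ∘ f; [L, U]); and (ii) every extreme point (x, y, z) of Q satisfies z ∈ {0,1}. -/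

import Mathlib

noncomputable section

/-- Dot product on `Fin n → ℝ`. -/
def dotp {n : ℕ} (w x : Fin n → ℝ) : ℝ := ∑ i, w i * x i

/-- `L̆_i`: `L_i` if `w_i ≥ 0`, else `U_i`. -/
def breveL {n : ℕ} (w L U : Fin n → ℝ) (i : Fin n) : ℝ := if 0 ≤ w i then L i else U i

/-- `Ŭ_i`: `U_i` if `w_i ≥ 0`, else `L_i`. -/
def breveU {n : ℕ} (w L U : Fin n → ℝ) (i : Fin n) : ℝ := if 0 ≤ w i then U i else L i

lemma term_breveL {n : ℕ} (w L U x : Fin n → ℝ)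
    (hx : ∀ i, L i ≤ x i ∧ x i ≤ U i) (i : Fin n) :
    0 ≤ w i * (x i - breveL w L U i) := by
  unfold breveL
  rcases le_or_gt 0 (w i) with h | h
  · simp only [if_pos h]; nlinarith [(hx i).1]
  · simp only [if_neg (not_le.mpr h)]; nlinarith [(hx i).2]

lemma term_breveU {n : ℕ} (w L U x : Fin n → ℝ)
    (hx : ∀ i, L i ≤ x i ∧ x i ≤ U i) (i : Fin n) :
    w i * x i ≤ w i * breveU w L U i := by
  unfold breveU
  rcases le_or_gt 0 (w i) with h | h
  · simp only [if_pos h]; nlinarith [(hx i).2]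
  · simp only [if_neg (not_le.mpr h)]; nlinarith [(hx i).1]

theorem stmt15 {η : ℕ} (hη : 1 ≤ η)
    (w : Fin η → ℝ) (b : ℝ)
    (L U : Fin η → ℝ) (hLU : ∀ i, L i ≤ U i)
    (hirrpos : ∃ x : Fin η → ℝ, (∀ i, L i ≤ x i ∧ x i ≤ U i) ∧ 0 < dotp w x + b)
    (hirrneg : ∃ x : Fin η → ℝ, (∀ i, L i ≤ x i ∧ x i ≤ U i) ∧ dotp w x + b < 0)
    (Q : Set ((Fin η → ℝ) × ℝ × ℝ))
    (hQ : Q = {p | (∀ i, L i ≤ p.1 i ∧ p.1 i ≤ U i) ∧ 0 ≤ p.2.1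
      ∧ 0 ≤ p.2.2 ∧ p.2.2 ≤ 1
      ∧ dotp w p.1 + b ≤ p.2.1
      ∧ ∀ I : Finset (Fin η),
          p.2.1 ≤ ∑ i ∈ I, w i * (p.1 i - breveL w L U i * (1 - p.2.2))
            + (b + ∑ i ∈ Iᶜ, w i * breveU w L U i) * p.2.2}) :
    -- (i) validity
    ((fun p : (Fin η → ℝ) × ℝ × ℝ => (p.1, p.2.1)) ''
        {p ∈ Q | p.2.2 = 0 ∨ p.2.2 = 1}
      = {q : (Fin η → ℝ) × ℝ | (∀ i, L i ≤ q.1 i ∧ q.1 i ≤ U i)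
          ∧ q.2 = max 0 (dotp w q.1 + b)})
    -- (ii) every extreme point of Q has binary z
    ∧ (∀ p ∈ Set.extremePoints ℝ Q, p.2.2 = 0 ∨ p.2.2 = 1) := by
  subst hQ
  constructor
  · -- part (i)
    ext q
    constructor
    · rintro ⟨⟨x, y, z⟩, ⟨⟨hbox, hy0, hz0, hz1, hyf, hI⟩, hz⟩, rfl⟩
      refine ⟨hbox, ?_⟩
      rcases hz with hz | hz <;> replace hz : z = _ := hz
      · -- z = 0
        have h1 := hI ∅
        simp only [hz, Finset.sum_empty, mul_zero, add_zero, zero_add] at h1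
        have hy : y = 0 := le_antisymm h1 hy0
        have hf0 : dotp w x + b ≤ 0 := by simpa [hy] using hyf
        simp [hy, max_eq_left hf0]
      · -- z = 1
        have h1 := hI Finset.univ
        simp only [hz, sub_self, mul_zero, sub_zero, Finset.compl_univ,
          Finset.sum_empty, add_zero, mul_one] at h1
        have hd : dotp w x = ∑ i, w i * x i := rfl
        have hf : y = dotp w x + b := le_antisymm (by rw [hd]; linarith) (by simpa using hyf)
        simp only
        rw [hf, max_eq_right (hf ▸ hy0)]
    · rintro ⟨hbox, hy⟩
      obtain ⟨x, y⟩ := q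
      simp only at hbox hy ⊢
      rcases le_or_gt (dotp w x + b) 0 with hf | hf
      · have hy0 : y = 0 := by rw [hy]; exact max_eq_left hf
        refine ⟨(x, 0, 0), ⟨⟨hbox, le_refl 0, le_refl 0, zero_le_one, hf, ?_⟩,
          Or.inl rfl⟩, by simp [hy0]⟩
        intro I
        simp only [sub_zero, mul_one, mul_zero, add_zero]
        exact Finset.sum_nonneg fun i _ => term_breveL w L U x hbox i
      · have hy1 : y = dotp w x + b := by rw [hy]; exact max_eq_right hf.le
        refine ⟨(x, y, 1), ⟨⟨hbox, by linarith, zero_le_one, le_refl 1,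
          by linarith, ?_⟩, Or.inr rfl⟩, by simp⟩
        intro I
        simp only [sub_self, mul_zero, sub_zero, mul_one]
        have e := Finset.sum_add_sum_compl I (fun i => w i * x i)
        have t := Finset.sum_le_sum (fun i (_ : i ∈ Iᶜ) => term_breveU w L U x hbox i)
        have hd : dotp w x = ∑ i, w i * x i := rfl
        linarith
  · -- part (ii)
    rintro ⟨x, y, z⟩ hp
    by_contra hzc
    push_neg at hzc
    obtain ⟨hzne0, hzne1⟩ := hzc
    obtain ⟨hpQ, hext⟩ := hp
    obtain ⟨hbox, hy0, hz0, hz1, hyf, hI⟩ := hpQ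
    have hzpos : 0 < z := lt_of_le_of_ne hz0 (Ne.symm hzne0)
    have hzlt : z < 1 := lt_of_le_of_ne hz1 hzne1
    have hz1pos : 0 < 1 - z := by linarith
    have hzne : z ≠ 0 := ne_of_gt hzpos
    set α : Fin η → ℝ := fun i => max (L i) ((x i - (1 - z) * U i) / z) with hαdef
    set β : Fin η → ℝ := fun i => min (U i) ((x i - (1 - z) * L i) / z) with hβdef
    have hαx : ∀ i, α i ≤ x i := by
      intro i
      refine max_le (hbox i).1 ?_
      rw [div_le_iff₀ hzpos]
      nlinarith [(hbox i).2]
    have hxβ : ∀ i, x i ≤ β i := by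
      intro i
      refine le_min (hbox i).2 ?_
      rw [le_div_iff₀ hzpos]
      nlinarith [(hbox i).1]
    have hαβ : ∀ i, α i ≤ β i := fun i => (hαx i).trans (hxβ i)
    have hLα : ∀ i, L i ≤ α i := fun i => le_max_left _ _
    have hβU : ∀ i, β i ≤ U i := fun i => min_le_left _ _
    have hβz : ∀ i, z * β i ≤ x i - (1 - z) * L i := by
      intro i
      have := min_le_right (U i) ((x i - (1 - z) * L i) / z)
      rw [le_div_iff₀ hzpos] at this
      linarith [this]
    have hαz : ∀ i, x i - (1 - z) * U i ≤ z * α i := by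
      intro i
      have := le_max_right (L i) ((x i - (1 - z) * U i) / z)
      rw [div_le_iff₀ hzpos] at this
      linarith [this]
    set γ : Fin η → ℝ := fun i => if 0 ≤ w i then α i else β i with hγdef
    set δ : Fin η → ℝ := fun i => if 0 ≤ w i then β i else α i with hδdef
    have hγr : ∀ i, α i ≤ γ i ∧ γ i ≤ β i := by
      intro i
      simp only [hγdef]
      split <;> exact ⟨by linarith [hαβ i], by linarith [hαβ i]⟩
    have hδr : ∀ i, α i ≤ δ i ∧ δ i ≤ β i := by
      intro i
      simp only [hδdef]
      split <;> exact ⟨by linarith [hαβ i], by linarith [hαβ i]⟩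
    set m : ℝ := dotp w γ + b with hmdef
    set M : ℝ := dotp w δ + b with hMdef
    -- z * m ≤ y
    have hwγx : ∀ i, w i * γ i ≤ w i * x i := by
      intro i
      simp only [hγdef]
      rcases le_or_gt 0 (w i) with h | h
      · rw [if_pos h]; nlinarith [hαx i]
      · rw [if_neg (not_le.mpr h)]; nlinarith [hxβ i]
    have hmy : m ≤ y := by
      have : dotp w γ ≤ dotp w x := Finset.sum_le_sum fun i _ => hwγx i
      simp only [hmdef]; linarith
    have hzm : z * m ≤ y := by nlinarith
    -- y ≤ z * M
    have hzM : y ≤ z * M := by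
      set Is : Finset (Fin η) := Finset.univ.filter
        (fun i => w i * (x i - breveL w L U i * (1 - z)) ≤ z * (w i * breveU w L U i)) with hIsdef
      have claim1 : ∀ i ∈ Is, w i * (x i - breveL w L U i * (1 - z)) ≤ z * (w i * δ i) := by
        intro i hi
        have hcond : w i * (x i - breveL w L U i * (1 - z)) ≤ z * (w i * breveU w L U i) := by
          simpa [hIsdef] using hi
        simp only [hδdef]
        rcases le_or_gt 0 (w i) with h | h
        · rw [if_pos h]
          simp only [breveL, breveU, if_pos h] at hcond ⊢
          have hβi : β i = min (U i) ((x i - (1 - z) * L i) / z) := rfl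
          have heq : z * (w i * ((x i - (1 - z) * L i) / z)) = w i * (x i - (1 - z) * L i) := by
            field_simp
          rw [hβi]
          rcases min_cases (U i) ((x i - (1 - z) * L i) / z) with ⟨he, hle⟩ | ⟨he, hle⟩ <;>
            rw [he] <;> linarith [hcond, heq]
        · rw [if_neg (not_le.mpr h)]
          simp only [breveL, breveU, if_neg (not_le.mpr h)] at hcond ⊢
          have hαi : α i = max (L i) ((x i - (1 - z) * U i) / z) := rfl
          have heq : z * (w i * ((x i - (1 - z) * U i) / z)) = w i * (x i - (1 - z) * U i) := by
            field_simp
          rw [hαi]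
          rcases max_cases (L i) ((x i - (1 - z) * U i) / z) with ⟨he, hle⟩ | ⟨he, hle⟩ <;>
            rw [he] <;> linarith [hcond, heq]
      have claim2 : ∀ i ∈ Isᶜ, z * (w i * breveU w L U i) ≤ z * (w i * δ i) := by
        intro i hi
        have hcond : ¬ (w i * (x i - breveL w L U i * (1 - z)) ≤ z * (w i * breveU w L U i)) := by
          simpa [hIsdef] using (Finset.mem_compl.mp hi)
        push_neg at hcond
        simp only [hδdef]
        rcases le_or_gt 0 (w i) with h | h
        · rw [if_pos h]
          simp only [breveL, breveU, if_pos h] at hcond ⊢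
          have hβi : β i = min (U i) ((x i - (1 - z) * L i) / z) := rfl
          have heq : z * (w i * ((x i - (1 - z) * L i) / z)) = w i * (x i - (1 - z) * L i) := by
            field_simp
          rw [hβi]
          rcases min_cases (U i) ((x i - (1 - z) * L i) / z) with ⟨he, hle⟩ | ⟨he, hle⟩ <;>
            rw [he] <;> linarith [hcond, heq]
        · rw [if_neg (not_le.mpr h)]
          simp only [breveL, breveU, if_neg (not_le.mpr h)] at hcond ⊢
          have hαi : α i = max (L i) ((x i - (1 - z) * U i) / z) := rfl
          have heq : z * (w i * ((x i - (1 - z) * U i) / z)) = w i * (x i - (1 - z) * U i) := by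
            field_simp
          rw [hαi]
          rcases max_cases (L i) ((x i - (1 - z) * U i) / z) with ⟨he, hle⟩ | ⟨he, hle⟩ <;>
            rw [he] <;> linarith [hcond, heq]
      have h1 := hI Is
      have e : dotp w δ = ∑ i ∈ Is, w i * δ i + ∑ i ∈ Isᶜ, w i * δ i :=
        (Finset.sum_add_sum_compl Is _).symm
      have t1 : ∑ i ∈ Is, w i * (x i - breveL w L U i * (1 - z))
          ≤ ∑ i ∈ Is, z * (w i * δ i) := Finset.sum_le_sum claim1
      have t2 : ∑ i ∈ Isᶜ, z * (w i * breveU w L U i)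
          ≤ ∑ i ∈ Isᶜ, z * (w i * δ i) := Finset.sum_le_sum claim2
      have e1 : ∑ i ∈ Is, z * (w i * δ i) = z * ∑ i ∈ Is, w i * δ i :=
        (Finset.mul_sum _ _ _).symm
      have e2 : ∑ i ∈ Isᶜ, z * (w i * δ i) = z * ∑ i ∈ Isᶜ, w i * δ i :=
        (Finset.mul_sum _ _ _).symm
      have e3 : ∑ i ∈ Isᶜ, z * (w i * breveU w L U i)
          = z * ∑ i ∈ Isᶜ, w i * breveU w L U i := (Finset.mul_sum _ _ _).symm
      have e4 : (b + ∑ i ∈ Isᶜ, w i * breveU w L U i) * z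
          = b * z + ∑ i ∈ Isᶜ, z * (w i * breveU w L U i) := by
        rw [add_mul, Finset.sum_mul]
        congr 1
        exact Finset.sum_congr rfl fun i _ => by ring
      have e5 : z * M = ∑ i ∈ Is, z * (w i * δ i) + ∑ i ∈ Isᶜ, z * (w i * δ i) + b * z := by
        rw [hMdef, e, e1, e2]; ring
      linarith [h1, t1, t2, e4, e5]
    have hmM : m ≤ M := le_of_mul_le_mul_left (hzm.trans hzM) hzpos
    have hmyz : m ≤ y / z := (le_div_iff₀ hzpos).mpr (by linarith)
    have hyzM : y / z ≤ M := (div_le_iff₀ hzpos).mpr (by linarith)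
    set t : ℝ := if M = m then 0 else (y / z - m) / (M - m) with htdef
    have ht01 : 0 ≤ t ∧ t ≤ 1 := by
      simp only [htdef]
      split
      · exact ⟨le_refl 0, zero_le_one⟩
      · rename_i hne
        have hlt : m < M := lt_of_le_of_ne hmM (Ne.symm hne)
        constructor
        · exact div_nonneg (by linarith) (by linarith)
        · rw [div_le_one (by linarith)]; linarith
    set x1 : Fin η → ℝ := fun i => γ i + t * (δ i - γ i) with hx1def
    have hdotx1 : dotp w x1 = (1 - t) * dotp w γ + t * dotp w δ := by
      unfold dotp
      rw [Finset.mul_sum, Finset.mul_sum, ← Finset.sum_add_distrib]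
      refine Finset.sum_congr rfl fun i _ => ?_
      simp only [hx1def]; ring
    have hdot1 : dotp w x1 + b = y / z := by
      rw [hdotx1]
      by_cases hMm : M = m
      · simp only [htdef, if_pos hMm]
        have hy_eq : y = z * m := by
          have := hzM; rw [hMm] at this; linarith
        rw [hy_eq, mul_comm z m, mul_div_assoc, div_self hzne, mul_one, hmdef]
        ring
      · simp only [htdef, if_neg hMm]
        have hne : M - m ≠ 0 := sub_ne_zero.mpr hMm
        have hγv : dotp w γ = m - b := by rw [hmdef]; ring
        have hδv : dotp w δ = M - b := by rw [hMdef]; ring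
        rw [hγv, hδv]
        field_simp
        ring
    have hx1r : ∀ i, α i ≤ x1 i ∧ x1 i ≤ β i := by
      intro i
      have h1 : 0 ≤ (1 - t) * (γ i - α i) :=
        mul_nonneg (by linarith [ht01.2]) (by linarith [(hγr i).1])
      have h2 : 0 ≤ t * (δ i - α i) := mul_nonneg ht01.1 (by linarith [(hδr i).1])
      have h3 : 0 ≤ (1 - t) * (β i - γ i) :=
        mul_nonneg (by linarith [ht01.2]) (by linarith [(hγr i).2])
      have h4 : 0 ≤ t * (β i - δ i) := mul_nonneg ht01.1 (by linarith [(hδr i).2])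
      have he : x1 i = γ i + t * (δ i - γ i) := rfl
      constructor <;> rw [he] <;> [linarith [h1, h2]; linarith [h3, h4]]
    have hx1box : ∀ i, L i ≤ x1 i ∧ x1 i ≤ U i :=
      fun i => ⟨(hLα i).trans (hx1r i).1, (hx1r i).2.trans (hβU i)⟩
    set x0 : Fin η → ℝ := fun i => (x i - z * x1 i) / (1 - z) with hx0def
    have hx0box : ∀ i, L i ≤ x0 i ∧ x0 i ≤ U i := by
      intro i
      have e : x0 i = (x i - z * x1 i) / (1 - z) := rfl
      constructor
      · rw [e, le_div_iff₀ hz1pos]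
        have hm1 : z * x1 i ≤ z * β i := mul_le_mul_of_nonneg_left (hx1r i).2 hzpos.le
        linarith [hβz i, hm1]
      · rw [e, div_le_iff₀ hz1pos]
        have hm2 : z * α i ≤ z * x1 i := mul_le_mul_of_nonneg_left (hx1r i).1 hzpos.le
        linarith [hαz i, hm2]
    have hdotx0 : dotp w x0 * (1 - z) = dotp w x - z * dotp w x1 := by
      unfold dotp
      rw [Finset.sum_mul, Finset.mul_sum, ← Finset.sum_sub_distrib]
      refine Finset.sum_congr rfl fun i _ => ?_
      simp only [hx0def]
      field_simp
    have hfx0 : dotp w x0 + b ≤ 0 := by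
      have hx1v : dotp w x1 = y / z - b := by linarith [hdot1]
      have hyv : z * (y / z) = y := by field_simp
      have key : (dotp w x0 + b) * (1 - z) = dotp w x + b - y := by
        rw [add_mul, hdotx0, hx1v]
        linarith [hyv]
      have keyd : dotp w x0 + b = (dotp w x + b - y) / (1 - z) := by
        rw [eq_div_iff (ne_of_gt hz1pos)]
        exact key
      rw [keyd]
      exact div_nonpos_iff.mpr (Or.inr ⟨by linarith [hyf], hz1pos.le⟩)
    have hy1nn : 0 ≤ y / z := div_nonneg hy0 hzpos.le
    -- membership of the two endpoints
    have hp0Q : ((x0, (0:ℝ), (0:ℝ)) : (Fin η → ℝ) × ℝ × ℝ) ∈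
        {p : (Fin η → ℝ) × ℝ × ℝ | (∀ i, L i ≤ p.1 i ∧ p.1 i ≤ U i) ∧ 0 ≤ p.2.1
          ∧ 0 ≤ p.2.2 ∧ p.2.2 ≤ 1
          ∧ dotp w p.1 + b ≤ p.2.1
          ∧ ∀ I : Finset (Fin η),
              p.2.1 ≤ ∑ i ∈ I, w i * (p.1 i - breveL w L U i * (1 - p.2.2))
                + (b + ∑ i ∈ Iᶜ, w i * breveU w L U i) * p.2.2} := by
      refine ⟨hx0box, le_refl 0, le_refl 0, zero_le_one, hfx0, ?_⟩
      intro I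
      simp only [sub_zero, mul_one, mul_zero, add_zero]
      exact Finset.sum_nonneg fun i _ => term_breveL w L U x0 hx0box i
    have hp1Q : ((x1, y / z, (1:ℝ)) : (Fin η → ℝ) × ℝ × ℝ) ∈
        {p : (Fin η → ℝ) × ℝ × ℝ | (∀ i, L i ≤ p.1 i ∧ p.1 i ≤ U i) ∧ 0 ≤ p.2.1
          ∧ 0 ≤ p.2.2 ∧ p.2.2 ≤ 1
          ∧ dotp w p.1 + b ≤ p.2.1
          ∧ ∀ I : Finset (Fin η),
              p.2.1 ≤ ∑ i ∈ I, w i * (p.1 i - breveL w L U i * (1 - p.2.2))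
                + (b + ∑ i ∈ Iᶜ, w i * breveU w L U i) * p.2.2} := by
      refine ⟨hx1box, hy1nn, zero_le_one, le_refl 1, le_of_eq hdot1, ?_⟩
      intro I
      simp only [sub_self, mul_zero, sub_zero, mul_one]
      have e := Finset.sum_add_sum_compl I (fun i => w i * x1 i)
      have t := Finset.sum_le_sum (fun i (_ : i ∈ Iᶜ) => term_breveU w L U x1 hx1box i)
      have hd : dotp w x1 = ∑ i, w i * x1 i := rfl
      linarith [hdot1]
    have hcomb : (1 - z) • ((x0, (0:ℝ), (0:ℝ)) : (Fin η → ℝ) × ℝ × ℝ)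
        + z • ((x1, y / z, (1:ℝ)) : (Fin η → ℝ) × ℝ × ℝ) = (x, y, z) := by
      refine Prod.ext ?_ (Prod.ext ?_ ?_)
      · funext i
        show (1 - z) * x0 i + z * x1 i = x i
        have e : x0 i = (x i - z * x1 i) / (1 - z) := rfl
        rw [e]
        field_simp
        ring
      · show (1 - z) * 0 + z * (y / z) = y
        field_simp
        ring
      · show (1 - z) * 0 + z * 1 = z
        ring
    have hseg : ((x, y, z) : (Fin η → ℝ) × ℝ × ℝ) ∈
        openSegment ℝ ((x0, (0:ℝ), (0:ℝ)) : (Fin η → ℝ) × ℝ × ℝ) (x1, y / z, 1) :=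
      ⟨1 - z, z, hz1pos, hzpos, by ring, hcomb⟩
    have h0 := hext hp0Q hp1Q hseg
    have : (0:ℝ) = z := congrArg (fun p : (Fin η → ℝ) × ℝ × ℝ => p.2.2) h0
    exact hzne0 this.symm
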